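/- Every tournament T on a finite vertex set admits a fractional dominating function g : V → [0,1] with ∑_{v∈V} g(v) ≤ 2, i.e., γ*(T) ≤ 2. -/

import Mathlib

open Finset
open scoped Classical

lemma tour_exists_distribution {V : Type*} [Fintype V] [Nonempty V] (A : V → V → ℝ)
    (hskew : ∀ u v, A u v = - A v u) :
    ∃ p : V → ℝ, (∀ v, 0 ≤ p v) ∧ (∑ v, p v = 1) ∧ ∀ v, 0 ≤ ∑ u, A u v * p u := by
  by_contra hcon
  push_neg at hcon
  -- the linear map p ↦ (v ↦ ∑ u, A u v * p u)
  let L : (V → ℝ) →ₗ[ℝ] (V → ℝ) :=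
    { toFun := fun p v => ∑ u, A u v * p u
      map_add' := by
        intro p q; funext v
        simp [mul_add, Finset.sum_add_distrib]
      map_smul' := by
        intro c p; funext v
        simp [Finset.mul_sum]
        congr 1; funext u; ring }
  have hLcont : Continuous L := L.continuous_of_finiteDimensional
  set s : Set (V → ℝ) := L '' stdSimplex ℝ V with hs_def
  set t : Set (V → ℝ) := {x | ∀ v, 0 ≤ x v} with ht_def
  have hconv_s : Convex ℝ s := (convex_stdSimplex ℝ V).linear_image L
  have hcomp_s : IsCompact s := (isCompact_stdSimplex ℝ V).image hLcont
  have hconv_t : Convex ℝ t := by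
    intro x hx y hy a b ha hb hab v
    exact add_nonneg (mul_nonneg ha (hx v)) (mul_nonneg hb (hy v))
  have hclosed_t : IsClosed t := by
    have : t = ⋂ v, (fun x : V → ℝ => x v) ⁻¹' Set.Ici 0 := by
      ext x; simp [ht_def, Set.mem_iInter]
    rw [this]
    exact isClosed_iInter fun v => isClosed_Ici.preimage (continuous_apply v)
  have hdisj : Disjoint s t := by
    rw [Set.disjoint_left]
    rintro x ⟨p, hp, rfl⟩ hxt
    obtain ⟨v, hv⟩ := hcon p hp.1 hp.2
    exact absurd (hxt v) (not_le.mpr hv)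
  obtain ⟨f, u, w, hfs, huw, hft⟩ :=
    geometric_hahn_banach_compact_closed hconv_s hcomp_s hconv_t hclosed_t hdisj
  have hw0 : w < 0 := by
    have h0 : (0 : V → ℝ) ∈ t := fun v => le_refl 0
    have := hft 0 h0
    simpa using this
  set y : V → ℝ := fun v => f (Pi.single v 1) with hy_def
  have hy : ∀ v, 0 ≤ y v := by
    intro v
    by_contra h
    push_neg at h
    have hc : 0 < w / y v := div_pos_of_neg_of_neg hw0 h
    have hmem : (w / y v) • (Pi.single v 1 : V → ℝ) ∈ t := by
      intro v'
      simp only [Pi.smul_apply, smul_eq_mul]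
      rcases eq_or_ne v' v with rfl | hne
      · simp
        positivity
      · simp [Pi.single_apply, hne.symm]
    have := hft _ hmem
    rw [map_smul] at this
    simp only [smul_eq_mul] at this
    have h2 : f (Pi.single v 1) = y v := rfl
    rw [h2, div_mul_cancel₀ w (ne_of_lt h)] at this
    exact lt_irrefl w this
  have hrep : ∀ x : V → ℝ, f x = ∑ v, x v * y v := by
    intro x
    have hx : x = ∑ v, (x v) • (Pi.single v 1 : V → ℝ) := by
      have := Finset.univ_sum_single x
      rw [← this]
      congr 1; funext v
      ext v'
      rcases eq_or_ne v' v with rfl | hne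
      · simp
      · simp [Pi.single_apply, hne.symm, hne]
    calc f x = f (∑ v, (x v) • (Pi.single v 1 : V → ℝ)) := by rw [← hx]
    _ = ∑ v, (x v) * f (Pi.single v 1) := by
        rw [map_sum]; congr 1; funext v; rw [map_smul]; simp
    _ = ∑ v, x v * y v := rfl
  have hAy : ∀ u0 : V, ∑ w', A u0 w' * y w' < 0 := by
    intro u0
    have hmem : Pi.single u0 (1:ℝ) ∈ stdSimplex ℝ V := by
      constructor
      · intro v; rcases eq_or_ne v u0 with rfl | hne
        · simp
        · simp [Pi.single_apply, hne]
      · simp [Finset.sum_pi_single']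
    have hLs : L (Pi.single u0 (1:ℝ)) ∈ s := ⟨_, hmem, rfl⟩
    have h1 := hfs _ hLs
    have h2 : f (L (Pi.single u0 (1:ℝ))) = ∑ w', A u0 w' * y w' := by
      rw [hrep]
      congr 1; funext w'
      congr 1
      show (∑ u, A u w' * (Pi.single u0 1 : V → ℝ) u) = A u0 w'
      rw [Finset.sum_eq_single u0]
      · simp
      · intro b _ hb; simp [Pi.single_apply, hb]
      · intro h; exact absurd (Finset.mem_univ u0) h
    rw [h2] at h1
    have hu0 : u < 0 := lt_trans huw hw0
    linarith
  -- the quadratic form vanishes by skew-symmetry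
  set S : ℝ := ∑ u0, ∑ w', y u0 * (A u0 w' * y w') with hS_def
  have hS0 : S = 0 := by
    have h1 : S = -S := by
      calc S = ∑ w', ∑ u0, y u0 * (A u0 w' * y w') := Finset.sum_comm
      _ = ∑ w', ∑ u0, -(y w' * (A w' u0 * y u0)) := by
          congr 1; funext b; congr 1; funext a
          rw [hskew a b]; ring
      _ = -S := by simp [hS_def, Finset.sum_neg_distrib]
    linarith
  have hterm : ∀ u0, y u0 * (∑ w', A u0 w' * y w') ≤ 0 := by
    intro u0
    have := mul_le_mul_of_nonneg_left (le_of_lt (hAy u0)) (hy u0)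
    simpa using this
  obtain ⟨u0, hu0⟩ : ∃ u0, 0 < y u0 := by
    by_contra h
    push_neg at h
    have hy0 : ∀ v, y v = 0 := fun v => le_antisymm (h v) (hy v)
    obtain ⟨v0⟩ := ‹Nonempty V›
    have := hAy v0
    simp [hy0] at this
  have hSlt : (∑ u0, y u0 * (∑ w', A u0 w' * y w')) < 0 := by
    have hstrict : y u0 * (∑ w', A u0 w' * y w') < 0 :=
      mul_neg_of_pos_of_neg hu0 (hAy u0)
    calc (∑ u0, y u0 * (∑ w', A u0 w' * y w')) < ∑ u0 : V, (0:ℝ) :=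
      Finset.sum_lt_sum (fun i _ => hterm i) ⟨u0, Finset.mem_univ u0, hstrict⟩
    _ = 0 := by simp
  have hSeq : S = ∑ u0, y u0 * (∑ w', A u0 w' * y w') := by
    simp [hS_def, Finset.mul_sum]
  rw [hSeq] at hS0
  linarith

/-- Every finite tournament has a fractional dominating function of total weight at
most `2`: i.e. `γ*(T) ≤ 2`. -/
theorem tournament_fractional_domination_le_two
    {V : Type*} [Fintype V] (E : V → V → Prop)
    (hirr : Irreflexive E) (hsimple : ∀ u v, E u v → ¬ E v u)
    (htour : ∀ u v : V, u ≠ v → E u v ∨ E v u) :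
    ∃ g : V → ℝ,
      (∀ v, 0 ≤ g v ∧ g v ≤ 1) ∧
      (∀ v, 1 ≤ g v + ∑ x ∈ univ.filter (fun x => E x v), g x) ∧
      ∑ v, g v ≤ 2 := by
  rcases isEmpty_or_nonempty V with hV | hV
  · exact ⟨fun _ => 0, fun v => isEmptyElim v, fun v => isEmptyElim v, by simp⟩
  · set A : V → V → ℝ := fun u v => if E u v then 1 else if E v u then -1 else 0 with hA_def
    have hskew : ∀ u v, A u v = - A v u := by
      intro u v
      by_cases h1 : E u v
      · simp [hA_def, h1, hsimple u v h1]
      · by_cases h2 : E v u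
        · simp [hA_def, h1, h2, hsimple v u h2]
        · simp [hA_def, h1, h2]
    obtain ⟨p, hp0, hp1, hpA⟩ := tour_exists_distribution A hskew
    refine ⟨fun v => min (2 * p v) 1, ?_, ?_, ?_⟩
    · intro v
      constructor
      · apply le_min
        · have := hp0 v; linarith
        · norm_num
      · exact min_le_right _ _
    · intro v
      set S := univ.filter (fun x => E x v) with hS_def
      set S' := univ.filter (fun x => E v x) with hS'_def
      show (1:ℝ) ≤ min (2 * p v) 1 + ∑ x ∈ S, min (2 * p x) 1
      -- identity for the matrix-vector product at v
      have hA1 : ∑ u, A u v * p u = (∑ u ∈ S, p u) - (∑ u ∈ S', p u) := by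
        rw [hS_def, hS'_def, Finset.sum_filter, Finset.sum_filter, ← Finset.sum_sub_distrib]
        congr 1; funext u
        by_cases h1 : E u v
        · simp [hA_def, h1, hsimple u v h1]
        · by_cases h2 : E v u
          · simp [hA_def, h1, h2]
          · simp [hA_def, h1, h2]
      -- the partition identity
      have hP : p v + (∑ u ∈ S, p u) + (∑ u ∈ S', p u) = 1 := by
        have : ∀ u : V, p u = (if u = v then p u else 0) + (if E u v then p u else 0)
            + (if E v u then p u else 0) := by
          intro u
          rcases eq_or_ne u v with rfl | hne
          · simp [hirr u]
          · rcases htour u v hne with h | h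
            · simp [hne, h, hsimple u v h]
            · simp [hne, h, hsimple v u h]
        calc p v + (∑ u ∈ S, p u) + (∑ u ∈ S', p u)
            = ∑ u, ((if u = v then p u else 0) + (if E u v then p u else 0)
              + (if E v u then p u else 0)) := by
              rw [Finset.sum_add_distrib, Finset.sum_add_distrib]
              rw [hS_def, hS'_def, Finset.sum_filter, Finset.sum_filter]
              congr 1
              rw [Finset.sum_ite_eq' univ v p]
              simp
        _ = ∑ u, p u := by congr 1; funext u; rw [← this u]
        _ = 1 := hp1
      have hkey : 1 ≤ p v + 2 * ∑ u ∈ S, p u := by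
        have h0 := hpA v
        rw [hA1] at h0
        linarith
      have hSnn : ∀ x ∈ S, (0:ℝ) ≤ min (2 * p x) 1 := by
        intro x _
        apply le_min
        · have := hp0 x; linarith
        · norm_num
      by_cases hv1 : 1 ≤ 2 * p v
      · have hgv : min (2 * p v) 1 = 1 := min_eq_right hv1
        have : (0:ℝ) ≤ ∑ x ∈ S, min (2 * p x) 1 := Finset.sum_nonneg hSnn
        rw [hgv]; linarith
      · by_cases hx1 : ∃ x ∈ S, 1 ≤ 2 * p x
        · obtain ⟨x, hxS, hx⟩ := hx1
          have hgx : min (2 * p x) 1 = 1 := min_eq_right hx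
          have h1 : (1:ℝ) ≤ ∑ x ∈ S, min (2 * p x) 1 := by
            calc (1:ℝ) = min (2 * p x) 1 := hgx.symm
            _ ≤ ∑ x ∈ S, min (2 * p x) 1 := Finset.single_le_sum hSnn hxS
          have h2 : (0:ℝ) ≤ min (2 * p v) 1 := le_min (by have := hp0 v; linarith) (by norm_num)
          linarith
        · push_neg at hx1
          push_neg at hv1
          have hgv : min (2 * p v) 1 = 2 * p v := min_eq_left (le_of_lt hv1)
          have hsum : ∑ x ∈ S, min (2 * p x) 1 = 2 * ∑ x ∈ S, p x := by
            rw [Finset.mul_sum]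
            apply Finset.sum_congr rfl
            intro x hx
            exact min_eq_left (le_of_lt (hx1 x hx))
          rw [hgv, hsum]
          have := hp0 v
          linarith
    · calc ∑ v, min (2 * p v) 1 ≤ ∑ v, 2 * p v :=
        Finset.sum_le_sum (fun v _ => min_le_left _ _)
      _ = 2 * ∑ v, p v := by rw [Finset.mul_sum]
      _ = 2 := by rw [hp1]; norm_num
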